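/- Let R be a commutative noetherian ring, S a left noetherian ring which is an R-algebra, and I, J ideals of R. If M is an (I,J)-torsion S-module, then the local cohomology H^i_{I,J}(M) vanishes for all i > 0, where H^i_{I,J} is the i-th right derived functor of the left-exact functor Γ_{I,J} on the category of S-modules. -/

import Mathlib

open CategoryTheory

universe u

/-- Annihilator in `R` of an `S`-submodule, `R` acting through `algebraMap R S`. -/
def annRS (R : Type*) {S M : Type*} [CommRing R] [Ring S] [Algebra R S]
    [AddCommGroup M] [Module S M] (N : Submodule S M) : Ideal R where
  carrier := {r : R | ∀ x ∈ N, algebraMap R S r • x = 0}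
  zero_mem' := by intro x _; simp
  add_mem' := by
    intro a b ha hb x hx
    rw [map_add, add_smul, ha x hx, hb x hx, add_zero]
  smul_mem' := by
    intro c a ha x hx
    rw [smul_eq_mul, map_mul, mul_smul, ha x hx, smul_zero]

/-- `Γ_{I,J}` of a module. -/
def gammaIJ (R S : Type*) [CommRing R] [Ring S] [Algebra R S] (I J : Ideal R)
    (M : Type*) [AddCommGroup M] [Module S M] : Submodule S M :=
  sSup {N : Submodule S M | N.FG ∧ ∃ n, 1 ≤ n ∧ I ^ n ≤ annRS R N ⊔ J}

/-- Any `S`-linear map carries `Γ_{I,J}` into `Γ_{I,J}`. -/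
lemma gammaIJ_map_le {R S : Type*} [CommRing R] [Ring S] [Algebra R S] (I J : Ideal R)
    {M M' : Type*} [AddCommGroup M] [Module S M] [AddCommGroup M'] [Module S M']
    (f : M →ₗ[S] M') :
    Submodule.map f (gammaIJ R S I J M) ≤ gammaIJ R S I J M' := by
  rw [Submodule.map_le_iff_le_comap]
  refine sSup_le ?_
  rintro N ⟨hfg, n, hn, hI⟩
  rw [← Submodule.map_le_iff_le_comap]
  refine le_sSup ⟨hfg.map f, n, hn, le_trans hI (sup_le_sup_right ?_ J)⟩
  rintro r hr
  rintro x ⟨y, hy, rfl⟩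
  rw [← map_smul, hr y hy, map_zero]

/-- The left-exact `(I,J)`-torsion functor `Γ_{I,J}` on the category of `S`-modules. -/
noncomputable def gammaFunctor (R : Type*) (S : Type u) [CommRing R] [Ring S] [Algebra R S]
    (I J : Ideal R) : ModuleCat.{u} S ⥤ ModuleCat.{u} S where
  obj M := ModuleCat.of S ↥(gammaIJ R S I J M)
  map {M M'} f :=
    ModuleCat.ofHom
      (LinearMap.restrict f.hom (fun x hx => gammaIJ_map_le I J f.hom ⟨x, hx, rfl⟩))
  map_id M := by ext x; rfl
  map_comp f g := by ext x; rfl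

instance gammaFunctor_additive (R : Type*) (S : Type u) [CommRing R] [Ring S] [Algebra R S]
    (I J : Ideal R) : (gammaFunctor R S I J).Additive where
  map_add := by intros; ext x; rfl

section ModuleTheory

variable {R : Type*} (S : Type*) [CommRing R] [Ring S] [Algebra R S]

/-- The annihilator of the cyclic submodule generated by `x`. -/
def elAnn {M : Type*} [AddCommGroup M] [Module S M] (x : M) : Ideal R :=
  annRS R (Submodule.span S {x})

lemma mem_elAnn_iff {M : Type*} [AddCommGroup M] [Module S M] {x : M} {r : R} :
    r ∈ elAnn S x ↔ ∀ s : S, algebraMap R S r • (s • x) = 0 := by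
  constructor
  · intro h s
    exact h (s • x) (Submodule.mem_span_singleton.mpr ⟨s, rfl⟩)
  · intro h y hy
    obtain ⟨s, rfl⟩ := Submodule.mem_span_singleton.mp hy
    exact h s

/-- The elementwise `(I, J)`-torsion condition. -/
def elCond (I J : Ideal R) {M : Type*} [AddCommGroup M] [Module S M] (x : M) : Prop :=
  ∃ n, 1 ≤ n ∧ I ^ n ≤ elAnn S x ⊔ J

variable {S}

lemma annRS_mono {M : Type*} [AddCommGroup M] [Module S M] {N N' : Submodule S M}
    (h : N ≤ N') : annRS R N' ≤ annRS R N :=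
  fun _ hr x hx => hr x (h hx)

lemma annRS_le_elAnn_of_mem {M : Type*} [AddCommGroup M] [Module S M] {N : Submodule S M}
    {x : M} (hx : x ∈ N) : annRS R N ≤ elAnn S x :=
  annRS_mono (Submodule.span_le.mpr (Set.singleton_subset_iff.mpr hx))

lemma annRS_bot (M : Type*) [AddCommGroup M] [Module S M] :
    annRS R (⊥ : Submodule S M) = ⊤ := by
  rw [eq_top_iff]
  intro r _ x hx
  rw [Submodule.mem_bot] at hx
  rw [hx, smul_zero]

lemma mul_annRS_le_sup {M : Type*} [AddCommGroup M] [Module S M] {N₁ N₂ : Submodule S M} :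
    annRS R N₁ * annRS R N₂ ≤ annRS R (N₁ ⊔ N₂) := by
  rw [Ideal.mul_le]
  intro r hr t ht x hx
  obtain ⟨x₁, h₁, x₂, h₂, rfl⟩ := Submodule.mem_sup.mp hx
  rw [smul_add, map_mul]
  have e₁ : (algebraMap R S r * algebraMap R S t) • x₁ = 0 := by
    rw [← map_mul, mul_comm, map_mul, mul_smul, hr x₁ h₁, smul_zero]
  have e₂ : (algebraMap R S r * algebraMap R S t) • x₂ = 0 := by
    rw [mul_smul, ht x₂ h₂, smul_zero]
  rw [e₁, e₂, add_zero]

lemma sup_cond {I J : Ideal R} {M : Type*} [AddCommGroup M] [Module S M]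
    {N₁ N₂ : Submodule S M} {n₁ n₂ : ℕ}
    (h₁ : I ^ n₁ ≤ annRS R N₁ ⊔ J) (h₂ : I ^ n₂ ≤ annRS R N₂ ⊔ J) :
    I ^ (n₁ + n₂) ≤ annRS R (N₁ ⊔ N₂) ⊔ J := by
  calc I ^ (n₁ + n₂) = I ^ n₁ * I ^ n₂ := pow_add I n₁ n₂
    _ ≤ (annRS R N₁ ⊔ J) * (annRS R N₂ ⊔ J) := Ideal.mul_mono h₁ h₂
    _ ≤ annRS R (N₁ ⊔ N₂) ⊔ J := by
        rw [Ideal.sup_mul, Ideal.mul_sup, Ideal.mul_sup]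
        refine sup_le (sup_le (le_trans mul_annRS_le_sup le_sup_left)
          (le_trans Ideal.mul_le_right le_sup_right))
          (sup_le (le_trans Ideal.mul_le_left le_sup_right)
          (le_trans Ideal.mul_le_right le_sup_right))

lemma bot_mem_gamma_family (I J : Ideal R) (M : Type*) [AddCommGroup M] [Module S M] :
    (⊥ : Submodule S M) ∈
      {N : Submodule S M | N.FG ∧ ∃ n, 1 ≤ n ∧ I ^ n ≤ annRS R N ⊔ J} :=
  ⟨Submodule.fg_bot, 1, le_refl 1, by rw [annRS_bot]; exact le_trans le_top le_sup_left⟩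

lemma mem_gammaIJ_iff {I J : Ideal R} {M : Type*} [AddCommGroup M] [Module S M] {x : M} :
    x ∈ gammaIJ R S I J M ↔ elCond S I J x := by
  constructor
  · intro hx
    have hdir : DirectedOn (· ≤ ·)
        {N : Submodule S M | N.FG ∧ ∃ n, 1 ≤ n ∧ I ^ n ≤ annRS R N ⊔ J} := by
      rintro N₁ ⟨h₁fg, n₁, hn₁, h₁⟩ N₂ ⟨h₂fg, n₂, hn₂, h₂⟩
      exact ⟨N₁ ⊔ N₂, ⟨h₁fg.sup h₂fg, n₁ + n₂, le_trans hn₁ (Nat.le_add_right _ _),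
        sup_cond h₁ h₂⟩, le_sup_left, le_sup_right⟩
    obtain ⟨N, ⟨_, n, hn, hIn⟩, hxN⟩ :=
      (Submodule.mem_sSup_of_directed ⟨⊥, bot_mem_gamma_family I J M⟩ hdir).mp hx
    exact ⟨n, hn, le_trans hIn (sup_le_sup_right (annRS_le_elAnn_of_mem hxN) J)⟩
  · rintro ⟨n, hn, h⟩
    exact Submodule.mem_sSup_of_mem (⟨Submodule.fg_span_singleton x, n, hn, h⟩ :
      Submodule.span S {x} ∈ {N : Submodule S M | N.FG ∧ ∃ n, 1 ≤ n ∧ I ^ n ≤ annRS R N ⊔ J})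
      (Submodule.mem_span_singleton_self x)

lemma elCond_map {I J : Ideal R} {M M' : Type*} [AddCommGroup M] [Module S M]
    [AddCommGroup M'] [Module S M'] (f : M →ₗ[S] M') {x : M} (h : elCond S I J x) :
    elCond S I J (f x) := by
  obtain ⟨n, hn, hle⟩ := h
  refine ⟨n, hn, le_trans hle (sup_le_sup_right ?_ J)⟩
  intro r hr
  rw [mem_elAnn_iff] at hr ⊢
  intro s
  rw [← map_smul f, ← map_smul f, hr s, map_zero]

lemma elCond_subtype {I J : Ideal R} {M : Type*} [AddCommGroup M] [Module S M]
    {N : Submodule S M} {x : ↥N} (h : elCond S I J (x : M)) : elCond S I J x := by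
  obtain ⟨n, hn, hle⟩ := h
  refine ⟨n, hn, le_trans hle (sup_le_sup_right ?_ J)⟩
  intro r hr
  rw [mem_elAnn_iff] at hr ⊢
  intro s
  exact Subtype.ext (hr s)

lemma uniform_bound {I J : Ideal R} {M : Type*} [AddCommGroup M] [Module S M]
    (N : Submodule S M) (hfg : N.FG) (h : ∀ x ∈ N, elCond S I J x) :
    ∃ n, 1 ≤ n ∧ I ^ n ≤ annRS R N ⊔ J := by
  classical
  obtain ⟨s, rfl⟩ := hfg
  induction s using Finset.induction_on with
  | empty =>
      refine ⟨1, le_refl 1, ?_⟩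
      rw [Finset.coe_empty, Submodule.span_empty, annRS_bot]
      exact le_trans le_top le_sup_left
  | @insert x s hxs ih =>
      have hx : elCond S I J x :=
        h x (Submodule.subset_span (by simp))
      obtain ⟨n₁, hn₁, h₁⟩ := hx
      obtain ⟨n₂, hn₂, h₂⟩ := ih (fun y hy => h y
        (Submodule.span_mono (by simp) hy))
      refine ⟨n₁ + n₂, le_trans hn₁ (Nat.le_add_right _ _), ?_⟩
      rw [Finset.coe_insert, Submodule.span_insert]
      exact sup_cond h₁ h₂

end ModuleTheory

section Stability

variable {R : Type*} (S : Type*) [CommRing R] [Ring S] [Algebra R S]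

/-- Scalar multiplication by the image of `r : R`, as an `S`-linear endomorphism. -/
def centralSmul {M : Type*} [AddCommGroup M] [Module S M] (r : R) : M →ₗ[S] M where
  toFun x := algebraMap R S r • x
  map_add' := smul_add _
  map_smul' s x := by
    simp only [RingHom.id_apply]
    rw [← mul_smul, ← mul_smul, Algebra.commutes]

lemma centralSmul_pow_apply {M : Type*} [AddCommGroup M] [Module S M] (r : R) (k : ℕ) (x : M) :
    (((centralSmul S r : Module.End S M)) ^ k) x = algebraMap R S (r ^ k) • x := by
  induction k with
  | zero => simp
  | succ k ih =>
      rw [pow_succ', Module.End.mul_apply, ih]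
      show algebraMap R S r • (algebraMap R S (r ^ k) • x) = _
      rw [← mul_smul, ← map_mul, ← pow_succ']

variable {S}

lemma ideal_pow_mono {A B : Ideal R} (h : A ≤ B) (k : ℕ) : A ^ k ≤ B ^ k := by
  induction k with
  | zero => simp
  | succ k ih => rw [pow_succ, pow_succ]; exact Ideal.mul_mono ih h

lemma sup_pow_le {A J : Ideal R} : ∀ k, 1 ≤ k → (A ⊔ J) ^ k ≤ A ^ k ⊔ J
  | 1, _ => by rw [pow_one, pow_one]
  | (k+2), _ => by
      rw [pow_succ (A ⊔ J), pow_succ A]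
      calc (A ⊔ J) ^ (k+1) * (A ⊔ J) ≤ (A ^ (k+1) ⊔ J) * (A ⊔ J) :=
            Ideal.mul_mono (sup_pow_le (k+1) (Nat.le_add_left 1 k)) le_rfl
        _ ≤ A ^ (k+1) * A ⊔ J := by
            rw [Ideal.sup_mul, Ideal.mul_sup, Ideal.mul_sup]
            exact sup_le (sup_le le_sup_left (le_trans Ideal.mul_le_right le_sup_right))
              (sup_le (le_trans Ideal.mul_le_left le_sup_right)
               (le_trans Ideal.mul_le_right le_sup_right))

lemma stability {I J : Ideal R} [IsNoetherianRing R] [IsNoetherianRing S]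
    {Q : Type*} [AddCommGroup Q] [Module S Q] (T : Submodule S Q)
    (hT : ∀ x ∈ T, elCond S I J x)
    (hess : ∀ X : Submodule S Q, X ⊓ T = ⊥ → X = ⊥) (x : Q) :
    elCond S I J x := by
  set N : Submodule S Q := Submodule.span S {x} with hN
  haveI : IsNoetherian S ↥N := isNoetherian_of_fg_of_noetherian N (Submodule.fg_span_singleton x)
  set T' : Submodule S ↥N := Submodule.comap N.subtype T with hT'def
  obtain ⟨n, hn, hIn⟩ := uniform_bound T' (IsNoetherian.noetherian T')
    (fun y hy => elCond_subtype (hT (y : Q) hy))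
  set a := annRS R T' with ha
  set b := annRS R (⊤ : Submodule S ↥N) with hb
  have hb_le : b ≤ elAnn S x := by
    intro r hr
    rw [mem_elAnn_iff]
    intro s
    have hmem : s • x ∈ N := Submodule.mem_span_singleton.mpr ⟨s, rfl⟩
    exact Subtype.ext_iff.mp (hr ⟨s • x, hmem⟩ Submodule.mem_top)
  have hrad : a ≤ b.radical := by
    intro r hr
    set f : Module.End S ↥N := centralSmul S r with hf
    have hmono : Monotone fun j => LinearMap.ker (f ^ j) := by
      apply monotone_nat_of_le_succ
      intro j y hy
      rw [LinearMap.mem_ker] at hy ⊢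
      rw [pow_succ', Module.End.mul_apply, hy, map_zero]
    obtain ⟨k, hk⟩ := monotone_stabilizes_iff_noetherian.mpr ‹IsNoetherian S ↥N›
      ⟨fun j => LinearMap.ker (f ^ j), hmono⟩
    have hzero : ∀ y : ↥N, (f ^ k) y = 0 := by
      have hD : Submodule.map N.subtype (LinearMap.range (f ^ k)) ⊓ T = ⊥ := by
        rw [eq_bot_iff]
        rintro z ⟨hz1, hz2⟩
        obtain ⟨t, ht, rfl⟩ := hz1
        obtain ⟨y, rfl⟩ := ht
        have ht' : (f ^ k) y ∈ T' := hz2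
        have h1 : f ((f ^ k) y) = 0 := hr _ ht'
        have h2 : (f ^ (k + 1)) y = 0 := by rw [pow_succ', Module.End.mul_apply, h1]
        have hkk : LinearMap.ker (f ^ k) = LinearMap.ker (f ^ (k + 1)) :=
          hk (k + 1) (Nat.le_succ k)
        have h3 : y ∈ LinearMap.ker (f ^ k) := by
          rw [hkk]; exact h2
        rw [LinearMap.mem_ker] at h3
        simp [h3]
      have hmap := hess _ hD
      intro y
      have hmem : ((f ^ k) y : Q) ∈ Submodule.map N.subtype (LinearMap.range (f ^ k)) :=
        ⟨(f ^ k) y, ⟨y, rfl⟩, rfl⟩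
      rw [hmap, Submodule.mem_bot] at hmem
      exact Subtype.ext hmem
    refine ⟨k, ?_⟩
    intro y _
    have h := hzero y
    rw [hf, centralSmul_pow_apply] at h
    exact h
  obtain ⟨K₀, hK₀⟩ := Ideal.exists_pow_le_of_le_radical_of_fg hrad (IsNoetherian.noetherian a)
  have hK : a ^ (K₀ + 1) ≤ b :=
    le_trans (by rw [pow_succ]; exact Ideal.mul_le_left) hK₀
  refine ⟨n * (K₀ + 1), le_trans hn (Nat.le_mul_of_pos_right n (Nat.succ_pos K₀)), ?_⟩
  calc I ^ (n * (K₀ + 1)) = (I ^ n) ^ (K₀ + 1) := pow_mul I n (K₀ + 1)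
    _ ≤ (a ⊔ J) ^ (K₀ + 1) := ideal_pow_mono hIn _
    _ ≤ a ^ (K₀ + 1) ⊔ J := sup_pow_le _ (Nat.le_add_left 1 K₀)
    _ ≤ elAnn S x ⊔ J := sup_le_sup_right (le_trans hK hb_le) J

end Stability

section Retraction

variable {R : Type*} {S : Type*} [CommRing R] [Ring S] [Algebra R S]
variable (I J : Ideal R) [IsNoetherianRing R] [IsNoetherianRing S]

lemma exists_retraction (P : Type*) [AddCommGroup P] [Module S P]
    (hP : Module.Injective S P) :
    ∃ π : P →ₗ[S] ↥(gammaIJ R S I J P), ∀ t : ↥(gammaIJ R S I J P), π (t : P) = t := by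
  classical
  set T := gammaIJ R S I J P with hTdef
  obtain ⟨C, hC⟩ : ∃ C, Maximal (fun C : Submodule S P => C ⊓ T = ⊥) C := by
    apply zorn_le₀
    intro c hc hchain
    by_cases hne : c.Nonempty
    · refine ⟨sSup c, ?_, fun z hz => le_sSup hz⟩
      show sSup c ⊓ T = ⊥
      rw [eq_bot_iff]
      rintro z ⟨hz1, hz2⟩
      obtain ⟨C₀, hC₀c, hzC₀⟩ :=
        (Submodule.mem_sSup_of_directed hne (hchain.directedOn)).mp hz1
      have : z ∈ C₀ ⊓ T := ⟨hzC₀, hz2⟩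
      rw [hc hC₀c] at this
      exact this
    · refine ⟨⊥, ?_, fun z hz => absurd ⟨z, hz⟩ hne⟩
      show (⊥ : Submodule S P) ⊓ T = ⊥
      rw [bot_inf_eq]
  set j : ↥T →ₗ[S] P ⧸ C := C.mkQ.comp T.subtype with hjdef
  have hjinj : Function.Injective j := by
    intro t₁ t₂ h
    have : ((t₁ : P) - t₂) ∈ C := by
      rw [← Submodule.Quotient.eq]
      exact h
    have hmem : ((t₁ : P) - t₂) ∈ C ⊓ T := ⟨this, sub_mem t₁.2 t₂.2⟩
    rw [hC.1, Submodule.mem_bot, sub_eq_zero] at hmem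
    exact Subtype.ext hmem
  have hess : ∀ X : Submodule S (P ⧸ C), X ⊓ LinearMap.range j = ⊥ → X = ⊥ := by
    intro X hX
    have hle : Submodule.comap C.mkQ X ⊓ T = ⊥ := by
      rw [eq_bot_iff]
      rintro z ⟨hz1, hz2⟩
      have hmem : C.mkQ z ∈ X ⊓ LinearMap.range j := ⟨hz1, ⟨⟨z, hz2⟩, rfl⟩⟩
      rw [hX, Submodule.mem_bot] at hmem
      have hzC : z ∈ C := by
        rwa [← Submodule.Quotient.mk_eq_zero]
      have : z ∈ C ⊓ T := ⟨hzC, hz2⟩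
      rw [hC.1] at this
      exact this
    have hCle : C ≤ Submodule.comap C.mkQ X := by
      intro z hz
      have : C.mkQ z = 0 := by
        rwa [← Submodule.Quotient.mk_eq_zero] at hz
      show C.mkQ z ∈ X
      rw [this]
      exact X.zero_mem
    have heq : Submodule.comap C.mkQ X = C := le_antisymm (hC.2 hle hCle) hCle
    rw [eq_bot_iff]
    intro ξ hξ
    obtain ⟨z, rfl⟩ := C.mkQ_surjective ξ
    have : z ∈ Submodule.comap C.mkQ X := hξ
    rw [heq] at this
    rw [Submodule.mem_bot, ← Submodule.Quotient.mk_eq_zero C] at *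
    exact this
  obtain ⟨φ, hφ⟩ := hP.out j hjinj T.subtype
  have htors : ∀ ξ : P ⧸ C, elCond S I J ξ := by
    refine stability (LinearMap.range j) ?_ hess
    rintro z ⟨t, rfl⟩
    exact elCond_map j (elCond_subtype (mem_gammaIJ_iff.mp t.2))
  have hrange : ∀ ξ : P ⧸ C, φ ξ ∈ T :=
    fun ξ => mem_gammaIJ_iff.mpr (elCond_map φ (htors ξ))
  refine ⟨(LinearMap.codRestrict T φ hrange).comp C.mkQ, fun t => ?_⟩
  apply Subtype.ext
  show φ (C.mkQ (t : P)) = (t : P)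
  exact hφ t

lemma injective_gamma (P : Type*) [AddCommGroup P] [Module S P]
    (hP : Module.Injective S P) :
    Module.Injective S ↥(gammaIJ R S I J P) := by
  obtain ⟨π, hπ⟩ := exists_retraction I J P hP
  constructor
  intro X Y _ _ _ _ f hf g
  obtain ⟨h, hh⟩ := hP.out f hf ((gammaIJ R S I J P).subtype.comp g)
  refine ⟨π.comp h, fun x => ?_⟩
  show π (h (f x)) = g x
  rw [hh x]
  exact hπ (g x)

end Retraction

section Resolution

variable (R : Type*) (S : Type u) [CommRing R] [Ring S] [Algebra R S]
variable (I J : Ideal R) [IsNoetherianRing R] [IsNoetherianRing S]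

/-- An object of `ModuleCat S` is `(I,J)`-torsion if all its elements are. -/
def TorsObj (X : ModuleCat.{u} S) : Prop := ∀ x : X, elCond S I J x

lemma TorsObj.gamma_eq_top {X : ModuleCat.{u} S} (hX : TorsObj R S I J X) :
    gammaIJ R S I J X = ⊤ := by
  rw [eq_top_iff]
  exact fun x _ => mem_gammaIJ_iff.mpr (hX x)

/-- The torsion part of an injective module containing `X`. -/
noncomputable def stepT (X : ModuleCat.{u} S) : ModuleCat.{u} S :=
  ModuleCat.of S ↥(gammaIJ R S I J ↥(Injective.under X))

lemma stepT_tors (X : ModuleCat.{u} S) : TorsObj R S I J (stepT R S I J X) :=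
  fun x => elCond_subtype (mem_gammaIJ_iff.mp x.2)

lemma stepT_injective (X : ModuleCat.{u} S) :
    CategoryTheory.Injective (stepT R S I J X) :=
  Module.injective_object_of_injective_module
    (inj := injective_gamma I J ↥(Injective.under X)
      (Module.injective_module_of_injective_object S ↥(Injective.under X)
        (inj := show CategoryTheory.Injective (ModuleCat.of S ↥(Injective.under X)) from
          Injective.injective_under X)))

/-- The embedding of a torsion module into the torsion part of its injective envelope. -/
noncomputable def stepι (X : ModuleCat.{u} S) (hX : TorsObj R S I J X) :
    X ⟶ stepT R S I J X :=
  ModuleCat.ofHom (LinearMap.codRestrict (gammaIJ R S I J ↥(Injective.under X)) (Injective.ι X).hom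
    (fun x => mem_gammaIJ_iff.mpr (elCond_map (Injective.ι X).hom (hX x))))

lemma stepι_injective (X : ModuleCat.{u} S) (hX : TorsObj R S I J X) :
    Function.Injective (stepι R S I J X hX) := by
  intro x y h
  have h0 : Function.Injective (Injective.ι X) :=
    (ModuleCat.mono_iff_injective (Injective.ι X)).mp inferInstance
  exact h0 (congrArg Subtype.val h)

/-- The cokernel of `stepι`. -/
noncomputable def stepQ (X : ModuleCat.{u} S) (hX : TorsObj R S I J X) : ModuleCat.{u} S :=
  ModuleCat.of S (↥(stepT R S I J X) ⧸ LinearMap.range (stepι R S I J X hX).hom)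

/-- The projection onto the cokernel of `stepι`. -/
noncomputable def stepp (X : ModuleCat.{u} S) (hX : TorsObj R S I J X) :
    stepT R S I J X ⟶ stepQ R S I J X hX :=
  ModuleCat.ofHom (LinearMap.range (stepι R S I J X hX).hom).mkQ

lemma stepQ_tors (X : ModuleCat.{u} S) (hX : TorsObj R S I J X) :
    TorsObj R S I J (stepQ R S I J X hX) := by
  intro x
  obtain ⟨y, rfl⟩ := (LinearMap.range (stepι R S I J X hX).hom).mkQ_surjective x
  exact elCond_map _ (stepT_tors R S I J X y)

lemma stepι_stepp (X : ModuleCat.{u} S) (hX : TorsObj R S I J X) (x : X) :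
    stepp R S I J X hX (stepι R S I J X hX x) = 0 :=
  (Submodule.Quotient.mk_eq_zero _).mpr ⟨x, rfl⟩

lemma stepp_ker (X : ModuleCat.{u} S) (hX : TorsObj R S I J X)
    (z : stepT R S I J X) (hz : stepp R S I J X hX z = 0) :
    ∃ x : X, stepι R S I J X hX x = z :=
  (Submodule.Quotient.mk_eq_zero _).mp hz

lemma stepp_surjective (X : ModuleCat.{u} S) (hX : TorsObj R S I J X) :
    Function.Surjective (stepp R S I J X hX) :=
  (LinearMap.range (stepι R S I J X hX).hom).mkQ_surjective

variable (M : Type u) [AddCommGroup M] [Module S M]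

/-- The tower of torsion modules appearing as cosyzygies of the resolution. -/
noncomputable def tower (hM : gammaIJ R S I J M = ⊤) :
    ℕ → Σ' X : ModuleCat.{u} S, TorsObj R S I J X
  | 0 => ⟨ModuleCat.of S M, fun x => mem_gammaIJ_iff.mp
      (show x ∈ gammaIJ R S I J M by rw [hM]; exact Submodule.mem_top)⟩
  | n + 1 => ⟨stepQ R S I J (tower hM n).1 (tower hM n).2,
      stepQ_tors R S I J (tower hM n).1 (tower hM n).2⟩

/-- The differentials of the torsion injective resolution. -/
noncomputable def resD (hM : gammaIJ R S I J M = ⊤) (n : ℕ) :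
    stepT R S I J (tower R S I J M hM n).1 ⟶ stepT R S I J (tower R S I J M hM (n + 1)).1 :=
  stepp R S I J (tower R S I J M hM n).1 (tower R S I J M hM n).2 ≫
    stepι R S I J (tower R S I J M hM (n + 1)).1 (tower R S I J M hM (n + 1)).2

lemma resD_squared (hM : gammaIJ R S I J M = ⊤) (n : ℕ) :
    resD R S I J M hM n ≫ resD R S I J M hM (n + 1) = 0 := by
  ext x
  show stepι R S I J (tower R S I J M hM (n + 2)).1 (tower R S I J M hM (n + 2)).2
      (stepp R S I J (tower R S I J M hM (n + 1)).1 (tower R S I J M hM (n + 1)).2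
        (stepι R S I J (tower R S I J M hM (n + 1)).1 (tower R S I J M hM (n + 1)).2
          (stepp R S I J (tower R S I J M hM n).1 (tower R S I J M hM n).2 x))) = 0
  erw [stepι_stepp, map_zero]

/-- The torsion injective resolution as a cochain complex. -/
noncomputable def resCocomplex (hM : gammaIJ R S I J M = ⊤) :
    CochainComplex (ModuleCat.{u} S) ℕ :=
  CochainComplex.of (fun n => stepT R S I J (tower R S I J M hM n).1) (resD R S I J M hM)
    (resD_squared R S I J M hM)

lemma resCocomplex_exactAt_succ (hM : gammaIJ R S I J M = ⊤) (n : ℕ) :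
    (resCocomplex R S I J M hM).ExactAt (n + 1) := by
  rw [HomologicalComplex.exactAt_iff' _ n (n + 1) (n + 1 + 1) (by simp) (by simp)]
  dsimp [resCocomplex, HomologicalComplex.sc', HomologicalComplex.shortComplexFunctor']
  simp only [CochainComplex.of_d]
  rw [ShortComplex.moduleCat_exact_iff]
  intro z hz
  have hz' : stepι R S I J (tower R S I J M hM (n + 2)).1 (tower R S I J M hM (n + 2)).2
      (stepp R S I J (tower R S I J M hM (n + 1)).1 (tower R S I J M hM (n + 1)).2 z) = 0 := hz
  have h2 : stepp R S I J (tower R S I J M hM (n + 1)).1 (tower R S I J M hM (n + 1)).2 z = 0 :=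
    stepι_injective R S I J _ _ (by rw [map_zero]; exact hz')
  obtain ⟨y, hy⟩ := stepp_ker R S I J _ _ z h2
  obtain ⟨w, rfl⟩ := stepp_surjective R S I J (tower R S I J M hM n).1 (tower R S I J M hM n).2 y
  exact ⟨w, hy⟩

end Resolution

section Final

variable (R : Type*) (S : Type u) [CommRing R] [Ring S] [Algebra R S]
variable (I J : Ideal R) [IsNoetherianRing R] [IsNoetherianRing S]
variable (M : Type u) [AddCommGroup M] [Module S M]

/-- The augmentation map of the torsion injective resolution. -/
noncomputable def resι0 (hM : gammaIJ R S I J M = ⊤) :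
    ModuleCat.of S M ⟶ (resCocomplex R S I J M hM).X 0 :=
  stepι R S I J (tower R S I J M hM 0).1 (tower R S I J M hM 0).2

lemma resι0_d (hM : gammaIJ R S I J M = ⊤) :
    resι0 R S I J M hM ≫ (resCocomplex R S I J M hM).d 0 1 = 0 := by
  rw [show (resCocomplex R S I J M hM).d 0 1 = resD R S I J M hM 0 from
    CochainComplex.of_d (fun n => stepT R S I J (tower R S I J M hM n).1) (resD R S I J M hM) 0]
  ext x
  show stepι R S I J (tower R S I J M hM 1).1 (tower R S I J M hM 1).2
      (stepp R S I J (tower R S I J M hM 0).1 (tower R S I J M hM 0).2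
        (stepι R S I J (tower R S I J M hM 0).1 (tower R S I J M hM 0).2 x)) = 0
  erw [stepι_stepp, map_zero]

lemma res_exact0 (hM : gammaIJ R S I J M = ⊤) :
    (ShortComplex.mk (resι0 R S I J M hM) ((resCocomplex R S I J M hM).d 0 1)
      (resι0_d R S I J M hM)).Exact := by
  rw [ShortComplex.moduleCat_exact_iff]
  intro z hz
  have hz0 : (resCocomplex R S I J M hM).d 0 1 z = 0 := hz
  rw [show (resCocomplex R S I J M hM).d 0 1 = resD R S I J M hM 0 from
    CochainComplex.of_d (fun n => stepT R S I J (tower R S I J M hM n).1) (resD R S I J M hM) 0] at hz0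
  have hz' : stepι R S I J (tower R S I J M hM 1).1 (tower R S I J M hM 1).2
      (stepp R S I J (tower R S I J M hM 0).1 (tower R S I J M hM 0).2 z) = 0 := hz0
  have h2 : stepp R S I J (tower R S I J M hM 0).1 (tower R S I J M hM 0).2 z = 0 :=
    stepι_injective R S I J _ _ (by rw [map_zero]; exact hz')
  exact stepp_ker R S I J _ _ z h2

/-- The torsion injective resolution. -/
noncomputable def torsRes (hM : gammaIJ R S I J M = ⊤) :
    InjectiveResolution (ModuleCat.of S M) where
  cocomplex := resCocomplex R S I J M hM
  injective n := stepT_injective R S I J _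
  ι := (CochainComplex.fromSingle₀Equiv _ _).symm ⟨resι0 R S I J M hM, resι0_d R S I J M hM⟩
  quasiIso := ⟨fun n => by
    cases n with
    | zero =>
        rw [CochainComplex.quasiIsoAt₀_iff, ShortComplex.quasiIso_iff_of_zeros]
        · refine (ShortComplex.exact_and_mono_f_iff_of_iso ?_).2
            ⟨res_exact0 R S I J M hM, (ModuleCat.mono_iff_injective _).mpr
              (stepι_injective R S I J (tower R S I J M hM 0).1 (tower R S I J M hM 0).2)⟩
          exact ShortComplex.isoMk (Iso.refl _) (Iso.refl _) (Iso.refl _) (by rfl) (by rfl)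
        all_goals rfl
    | succ n =>
        rw [quasiIsoAt_iff_exactAt]
        · exact resCocomplex_exactAt_succ R S I J M hM n
        · apply CochainComplex.exactAt_succ_single_obj⟩

/-- Applying `Γ_{I,J}` to the torsion resolution gives back the resolution. -/
noncomputable def gammaCocomplexIso (hM : gammaIJ R S I J M = ⊤) :
    ((gammaFunctor R S I J).mapHomologicalComplex (ComplexShape.up ℕ)).obj
      (resCocomplex R S I J M hM) ≅ resCocomplex R S I J M hM :=
  HomologicalComplex.Hom.isoOfComponents
    (fun n => LinearEquiv.toModuleIso
      (LinearEquiv.ofTop _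
        (TorsObj.gamma_eq_top R S I J (stepT_tors R S I J (tower R S I J M hM n).1))))
    (fun i j _ => by ext x; rfl)

end Final

/-- If `M` is an `(I,J)`-torsion `S`-module, then the local cohomology
`H^i_{I,J}(M) = (R^i Γ_{I,J})(M)` vanishes for all `i > 0`. -/
theorem rightDerived_gammaFunctor_isZero_of_torsion
    (R : Type*) (S : Type u) [CommRing R] [IsNoetherianRing R] [Ring S]
    [IsNoetherianRing S] [Algebra R S] (I J : Ideal R)
    (M : Type u) [AddCommGroup M] [Module S M]
    (hM : gammaIJ R S I J M = ⊤) (i : ℕ) (hi : 0 < i) :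
    Limits.IsZero (((gammaFunctor R S I J).rightDerived i).obj (ModuleCat.of S M)) := by
  obtain ⟨j, rfl⟩ : ∃ j, i = j + 1 := ⟨i - 1, (Nat.succ_pred_eq_of_pos hi).symm⟩
  refine Limits.IsZero.of_iso ?_
    ((torsRes R S I J M hM).isoRightDerivedObj (gammaFunctor R S I J) (j + 1))
  refine Limits.IsZero.of_iso ?_
    ((HomologicalComplex.homologyFunctor _ _ (j + 1)).mapIso (gammaCocomplexIso R S I J M hM))
  exact (HomologicalComplex.exactAt_iff_isZero_homology _ _).mp
    (resCocomplex_exactAt_succ R S I J M hM j)
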